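/- Let N+1 = 2k, let M_ν be the cyclic shift matrix on ℝ^{2k} (M_ν q = (q_2,...,q_{2k}, q_1)), and define f_s(q) = ⟨q, M_ν^s q⟩ for s = 0,1,...,k. Then the polynomials f_0,...,f_k form a basis of the vector space P_2 of homogeneous quadratic polynomials f on ℝ^{2k} satisfying f(M_ν q) = f(q) for all q. -/

import Mathlib

open MvPolynomial

open Fin.CommRing

namespace QuadInvAux

lemma fin_add_eq_iff {n : ℕ} [NeZero n] (i j t : Fin n) :
    i + j = t ↔ (i.val + j.val = t.val ∨ i.val + j.val = t.val + n) := by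
  have hi := i.isLt; have hj := j.isLt; have ht := t.isLt
  rw [Fin.ext_iff, Fin.val_add]
  constructor
  · intro h
    rcases lt_or_ge (i.val + j.val) n with hlt | hge
    · rw [Nat.mod_eq_of_lt hlt] at h; omega
    · rw [Nat.mod_eq_sub_mod hge, Nat.mod_eq_of_lt (by omega)] at h; omega
  · rintro (h | h)
    · rw [h, Nat.mod_eq_of_lt ht]
    · rw [h, Nat.add_mod_right, Nat.mod_eq_of_lt ht]

lemma pair_eq_pair_iff {n : ℕ} (i j a b : Fin n) :
    Finsupp.single i 1 + Finsupp.single j 1 = Finsupp.single a 1 + Finsupp.single b 1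
      ↔ (i = a ∧ j = b) ∨ (i = b ∧ j = a) := by
  rw [Finsupp.single_add_single_eq_single_add_single (by norm_num) (by norm_num)]
  simp

lemma degree_two_decomp {n : ℕ} (d : Fin n →₀ ℕ) (hd : d.degree = 2) :
    ∃ i j : Fin n, d = Finsupp.single i 1 + Finsupp.single j 1 := by
  have hcard : Multiset.card d.toMultiset = 2 := (Finsupp.card_toMultiset d).trans hd
  obtain ⟨i, j, hij⟩ := Multiset.card_eq_two.mp hcard
  rw [Finsupp.toMultiset_eq_iff] at hij
  refine ⟨i, j, ?_⟩
  rw [hij, eq_comm, ← Finsupp.toMultiset_eq_iff, Finsupp.toMultiset_add]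
  simp [Finsupp.toMultiset_single, Multiset.singleton_add]

lemma coeff_shift_pair {n : ℕ} [NeZero n] {f : MvPolynomial (Fin n) ℝ}
    (hf : rename (· + (1 : Fin n)) f = f) (a b : Fin n) (m : ℕ) :
    coeff (Finsupp.single (a + m) 1 + Finsupp.single (b + m) 1) f
      = coeff (Finsupp.single a 1 + Finsupp.single b 1) f := by
  induction m with
  | zero => simp
  | succ m ih =>
      have key : ∀ x y : Fin n,
          coeff (Finsupp.single (x + 1) 1 + Finsupp.single (y + 1) 1) f
            = coeff (Finsupp.single x 1 + Finsupp.single y 1) f := by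
        intro x y
        conv_lhs => rw [← hf]
        rw [show (Finsupp.single (x + 1) 1 + Finsupp.single (y + 1) 1 : Fin n →₀ ℕ)
            = Finsupp.mapDomain (· + 1) (Finsupp.single x 1 + Finsupp.single y 1) by
          rw [Finsupp.mapDomain_add, Finsupp.mapDomain_single, Finsupp.mapDomain_single]]
        exact coeff_rename_mapDomain _ (add_left_injective 1) f _
      have hc : ((m + 1 : ℕ) : Fin n) = (m : Fin n) + 1 := by push_cast; ring
      rw [hc, ← add_assoc, ← add_assoc, key, ih]

lemma coeff_pair_canonical {n : ℕ} [NeZero n] {f : MvPolynomial (Fin n) ℝ}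
    (hf : rename (· + (1 : Fin n)) f = f) (i j : Fin n) :
    coeff (Finsupp.single i 1 + Finsupp.single j 1) f
      = coeff (Finsupp.single 0 1 + Finsupp.single (j - i) 1) f := by
  have := coeff_shift_pair hf 0 (j - i) i.val
  rw [Fin.cast_val_eq_self] at this
  rw [zero_add, sub_add_cancel] at this
  exact this

lemma coeff_pair_flip {n : ℕ} [NeZero n] {f : MvPolynomial (Fin n) ℝ}
    (hf : rename (· + (1 : Fin n)) f = f) (t : Fin n) :
    coeff (Finsupp.single 0 1 + Finsupp.single t 1) f
      = coeff (Finsupp.single 0 1 + Finsupp.single (-t) 1) f := by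
  have := coeff_shift_pair hf 0 t (-t).val
  rw [Fin.cast_val_eq_self] at this
  rw [zero_add, add_neg_cancel] at this
  rw [← this]
  rw [add_comm (Finsupp.single (-t) 1)]

lemma X_mul_X {n : ℕ} (i j : Fin n) :
    (X i * X j : MvPolynomial (Fin n) ℝ)
      = monomial (Finsupp.single i 1 + Finsupp.single j 1) 1 := by
  rw [X, X, monomial_mul, one_mul]

/-- The embedding of `Fin (k+1)` into `Fin (2k)`. -/
def emb {k : ℕ} (hk : 1 ≤ k) (s : Fin (k + 1)) : Fin (2 * k) :=
  ⟨(s : ℕ), by have := s.isLt; omega⟩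

@[simp] lemma emb_val {k : ℕ} (hk : 1 ≤ k) (s : Fin (k + 1)) :
    ((emb hk s : Fin (2 * k)) : ℕ) = (s : ℕ) := rfl

end QuadInvAux

open QuadInvAux

theorem quadratic_invariants_basis (k : ℕ) (hk : 1 ≤ k)
    (F : Fin (k + 1) → MvPolynomial (Fin (2 * k)) ℝ)
    (hF : ∀ s : Fin (k + 1),
      F s = ∑ i : Fin (2 * k),
        X i * X ⟨((i : ℕ) + (s : ℕ)) % (2 * k),
          Nat.mod_lt _ (Nat.lt_of_le_of_lt (Nat.zero_le _) i.2)⟩) :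
    LinearIndependent ℝ F ∧
    ∀ f : MvPolynomial (Fin (2 * k)) ℝ,
      (f.IsHomogeneous 2 ∧
        ∀ q : Fin (2 * k) → ℝ,
          MvPolynomial.eval
            (fun i : Fin (2 * k) =>
              q ⟨((i : ℕ) + 1) % (2 * k),
                Nat.mod_lt _ (Nat.lt_of_le_of_lt (Nat.zero_le _) i.2)⟩) f
            = MvPolynomial.eval q f)
      ↔ f ∈ Submodule.span ℝ (Set.range F) := by
  haveI : NeZero (2 * k) := ⟨by omega⟩
  have hone : (1 : Fin (2 * k)).val = 1 := by
    rw [Fin.val_one']; exact Nat.mod_eq_of_lt (by omega)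
  have hshift : ∀ i : Fin (2 * k),
      (⟨((i : ℕ) + 1) % (2 * k),
        Nat.mod_lt _ (Nat.lt_of_le_of_lt (Nat.zero_le _) i.2)⟩ : Fin (2 * k))
        = i + 1 := by
    intro i; apply Fin.ext; rw [Fin.val_add, hone]
  have hFs : ∀ s, F s = ∑ i : Fin (2 * k), X i * X (i + emb hk s) := by
    intro s; rw [hF s]
    refine Finset.sum_congr rfl fun i _ => ?_
    congr 2
  have hFhom : ∀ s, (F s).IsHomogeneous 2 := by
    intro s; rw [hFs s]
    apply MvPolynomial.IsHomogeneous.sum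
    intro i _
    simpa using (isHomogeneous_X ℝ i).mul (isHomogeneous_X ℝ (i + emb hk s))
  have hFinv : ∀ s, rename (· + (1 : Fin (2 * k))) (F s) = F s := by
    intro s
    rw [hFs s, map_sum]
    rw [show (∑ i : Fin (2 * k), rename (· + (1 : Fin (2 * k))) (X i * X (i + emb hk s)))
        = ∑ i : Fin (2 * k), X (i + 1) * X ((i + 1) + emb hk s) by
      refine Finset.sum_congr rfl fun i _ => ?_
      rw [map_mul, rename_X, rename_X]
      congr 2
      ring]
    exact Fintype.sum_equiv (Equiv.addRight (1 : Fin (2 * k))) _ _ (fun i => rfl)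
  -- canonical coefficients of the F s
  have hFcoeff : ∀ (s t : Fin (k + 1)),
      coeff (Finsupp.single 0 1 + Finsupp.single (emb hk t) 1) (F s)
        = if (s : ℕ) = (t : ℕ) then (if (t : ℕ) = k then 2 else 1) else 0 := by
    intro s t
    have hs := s.isLt
    have ht := t.isLt
    rw [hFs s, MvPolynomial.coeff_sum]
    have hterm : ∀ i : Fin (2 * k),
        coeff (Finsupp.single 0 1 + Finsupp.single (emb hk t) 1) (X i * X (i + emb hk s))
          = if ((i : ℕ) = 0 ∧ ((i : ℕ) + (s : ℕ) = (t : ℕ) ∨ (i : ℕ) + (s : ℕ) = (t : ℕ) + 2 * k))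
              ∨ ((i : ℕ) = (t : ℕ) ∧ ((i : ℕ) + (s : ℕ) = 0 ∨ (i : ℕ) + (s : ℕ) = 2 * k))
            then (1 : ℝ) else 0 := by
      intro i
      rw [X_mul_X, coeff_monomial]
      congr 1
      rw [eq_iff_iff, pair_eq_pair_iff]
      have h1 : (i = 0) ↔ (i : ℕ) = 0 := by
        rw [Fin.ext_iff, Fin.val_zero]
      have h2 : (i = emb hk t) ↔ (i : ℕ) = (t : ℕ) := Fin.ext_iff
      have h3 : (i + emb hk s = emb hk t) ↔
          ((i : ℕ) + (s : ℕ) = (t : ℕ) ∨ (i : ℕ) + (s : ℕ) = (t : ℕ) + 2 * k) := by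
        rw [fin_add_eq_iff]; rfl
      have h4 : (i + emb hk s = 0) ↔
          ((i : ℕ) + (s : ℕ) = 0 ∨ (i : ℕ) + (s : ℕ) = 2 * k) := by
        rw [fin_add_eq_iff, Fin.val_zero]; simp [emb]
      rw [h1, h2, h3, h4]
    simp_rw [hterm]
    by_cases h1 : (s : ℕ) = (t : ℕ)
    · by_cases h2 : (t : ℕ) = k
      · rw [if_pos h1, if_pos h2]
        have hcond : ∀ i : Fin (2 * k),
            (((i : ℕ) = 0 ∧ ((i : ℕ) + (s : ℕ) = (t : ℕ) ∨ (i : ℕ) + (s : ℕ) = (t : ℕ) + 2 * k))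
              ∨ ((i : ℕ) = (t : ℕ) ∧ ((i : ℕ) + (s : ℕ) = 0 ∨ (i : ℕ) + (s : ℕ) = 2 * k)))
            ↔ (i = 0 ∨ i = emb hk t) := by
          intro i
          have hi := i.isLt
          simp only [Fin.ext_iff, Fin.val_zero, emb_val]
          omega
        simp_rw [hcond]
        have hne : (0 : Fin (2 * k)) ≠ emb hk t := by
          intro h
          have := congrArg Fin.val h
          rw [Fin.val_zero, emb_val] at this
          omega
        have hsplit : ∀ i : Fin (2 * k), (if (i = 0 ∨ i = emb hk t) then (1 : ℝ) else 0)
            = (if i = 0 then (1 : ℝ) else 0) + (if i = emb hk t then (1 : ℝ) else 0) := by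
          intro i
          by_cases hi0 : i = 0
          · subst hi0
            rw [if_pos (Or.inl rfl), if_pos rfl, if_neg hne]; norm_num
          · by_cases hit : i = emb hk t
            · subst hit
              rw [if_pos (Or.inr rfl), if_neg hi0, if_pos rfl]; norm_num
            · rw [if_neg (by tauto), if_neg hi0, if_neg hit]; norm_num
        simp_rw [hsplit]
        rw [Finset.sum_add_distrib,
          Finset.sum_ite_eq' Finset.univ (0 : Fin (2 * k)) (fun _ => (1 : ℝ)),
          Finset.sum_ite_eq' Finset.univ (emb hk t) (fun _ => (1 : ℝ))]
        simp only [Finset.mem_univ, if_pos]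
        norm_num
      · rw [if_pos h1, if_neg h2]
        have hcond : ∀ i : Fin (2 * k),
            (((i : ℕ) = 0 ∧ ((i : ℕ) + (s : ℕ) = (t : ℕ) ∨ (i : ℕ) + (s : ℕ) = (t : ℕ) + 2 * k))
              ∨ ((i : ℕ) = (t : ℕ) ∧ ((i : ℕ) + (s : ℕ) = 0 ∨ (i : ℕ) + (s : ℕ) = 2 * k)))
            ↔ (i = 0) := by
          intro i
          have hi := i.isLt
          simp only [Fin.ext_iff, Fin.val_zero]
          omega
        simp_rw [hcond]
        rw [Finset.sum_ite_eq' Finset.univ (0 : Fin (2 * k)) (fun _ => (1 : ℝ))]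
        simp
    · rw [if_neg h1]
      have hcond : ∀ i : Fin (2 * k),
          ¬(((i : ℕ) = 0 ∧ ((i : ℕ) + (s : ℕ) = (t : ℕ) ∨ (i : ℕ) + (s : ℕ) = (t : ℕ) + 2 * k))
            ∨ ((i : ℕ) = (t : ℕ) ∧ ((i : ℕ) + (s : ℕ) = 0 ∨ (i : ℕ) + (s : ℕ) = 2 * k))) := by
        intro i
        have hi := i.isLt
        omega
      simp_rw [if_neg (hcond _)]
      simp
  constructor
  · -- linear independence
    rw [Fintype.linearIndependent_iff]
    intro g hg s
    have hs := s.isLt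
    have := congrArg (coeff (Finsupp.single 0 1 + Finsupp.single (emb hk s) 1)) hg
    rw [MvPolynomial.coeff_sum] at this
    simp_rw [MvPolynomial.coeff_smul] at this
    have hred : ∀ t : Fin (k + 1),
        g t • coeff (Finsupp.single 0 1 + Finsupp.single (emb hk s) 1) (F t)
          = if t = s then g t • (if (s : ℕ) = k then (2 : ℝ) else 1) else 0 := by
      intro t
      rw [hFcoeff t s]
      by_cases hts : t = s
      · rw [if_pos hts, if_pos (by rw [hts])]
      · rw [if_neg (fun h => hts (Fin.ext h)), if_neg hts, smul_zero]
    simp_rw [hred] at this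
    rw [Finset.sum_ite_eq' Finset.univ s] at this
    simp only [Finset.mem_univ, if_pos, MvPolynomial.coeff_zero, smul_eq_mul] at this
    by_cases hsk : (s : ℕ) = k
    · rw [if_pos hsk] at this; linarith
    · rw [if_neg hsk] at this; linarith
  · -- characterization of the span
    intro f
    constructor
    · rintro ⟨hhom, hinv⟩
      have hren : rename (· + (1 : Fin (2 * k))) f = f := by
        apply MvPolynomial.funext
        intro q
        rw [eval_rename]
        have := hinv q
        simp_rw [hshift] at this
        exact this
      set a : Fin (k + 1) → ℝ := fun s =>
        coeff (Finsupp.single 0 1 + Finsupp.single (emb hk s) 1) f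
          / (if (s : ℕ) = k then 2 else 1) with ha
      set g : MvPolynomial (Fin (2 * k)) ℝ := ∑ s : Fin (k + 1), a s • F s with hgdef
      have hghom : g.IsHomogeneous 2 := by
        rw [← mem_homogeneousSubmodule]
        apply Submodule.sum_mem
        intro s _
        exact Submodule.smul_mem _ _ ((mem_homogeneousSubmodule _ _).mpr (hFhom s))
      have hginv : rename (· + (1 : Fin (2 * k))) g = g := by
        rw [hgdef, map_sum]
        refine Finset.sum_congr rfl fun s _ => ?_
        rw [map_smul, hFinv s]
      have hcanon : ∀ s : Fin (k + 1),
          coeff (Finsupp.single 0 1 + Finsupp.single (emb hk s) 1) g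
            = coeff (Finsupp.single 0 1 + Finsupp.single (emb hk s) 1) f := by
        intro s
        rw [hgdef, MvPolynomial.coeff_sum]
        simp_rw [MvPolynomial.coeff_smul]
        have hred : ∀ t : Fin (k + 1),
            a t • coeff (Finsupp.single 0 1 + Finsupp.single (emb hk s) 1) (F t)
              = if t = s then a t • (if (s : ℕ) = k then (2 : ℝ) else 1) else 0 := by
          intro t
          rw [hFcoeff t s]
          by_cases hts : t = s
          · rw [if_pos hts, if_pos (by rw [hts])]
          · rw [if_neg (fun h => hts (Fin.ext h)), if_neg hts, smul_zero]
        simp_rw [hred]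
        rw [Finset.sum_ite_eq' Finset.univ s]
        simp only [Finset.mem_univ, if_pos]
        rw [ha]
        beta_reduce
        by_cases hsk : (s : ℕ) = k
        · rw [if_pos hsk, smul_eq_mul]
          field_simp
        · rw [if_neg hsk, smul_eq_mul]
          field_simp
      have hfg : f = g := by
        apply MvPolynomial.ext
        intro d
        by_cases hdeg : d.degree = 2
        · obtain ⟨i, j, rfl⟩ := degree_two_decomp d hdeg
          obtain ⟨t, ht, hcoe⟩ :
              ∃ t : Fin (2 * k), (t : ℕ) ≤ k ∧ ∀ (p : MvPolynomial (Fin (2 * k)) ℝ),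
                rename (· + (1 : Fin (2 * k))) p = p →
                coeff (Finsupp.single i 1 + Finsupp.single j 1) p
                  = coeff (Finsupp.single 0 1 + Finsupp.single t 1) p := by
            by_cases hle : ((j - i : Fin (2 * k)) : ℕ) ≤ k
            · exact ⟨j - i, hle, fun p hp => coeff_pair_canonical hp i j⟩
            · refine ⟨-(j - i), ?_, fun p hp => ?_⟩
              · have hval : (-(j - i) : Fin (2 * k)).val = 2 * k - ((j - i : Fin (2 * k)) : ℕ) := by
                  rw [Fin.neg_def]
                  have := (j - i : Fin (2 * k)).isLt
                  exact Nat.mod_eq_of_lt (by omega)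
                rw [hval]
                have := (j - i : Fin (2 * k)).isLt
                omega
              · rw [coeff_pair_canonical hp i j, coeff_pair_flip hp (j - i)]
          have htemb : t = emb hk ⟨(t : ℕ), by omega⟩ := Fin.ext rfl
          rw [hcoe f hren, hcoe g hginv, htemb, hcanon ⟨(t : ℕ), by omega⟩]
        · rw [hhom.coeff_eq_zero hdeg, hghom.coeff_eq_zero hdeg]
      rw [hfg, hgdef]
      apply Submodule.sum_mem
      intro s _
      exact Submodule.smul_mem _ _ (Submodule.subset_span ⟨s, rfl⟩)
    · intro hf
      refine Submodule.span_induction ?_ ?_ ?_ ?_ hf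
      · rintro p ⟨s, rfl⟩
        refine ⟨hFhom s, fun q => ?_⟩
        simp_rw [hshift]
        conv_rhs => rw [← hFinv s]
        rw [eval_rename]
        rfl
      · exact ⟨isHomogeneous_zero _ _ _, fun q => by simp⟩
      · rintro p1 p2 _ _ ⟨h1, h1'⟩ ⟨h2, h2'⟩
        exact ⟨h1.add h2, fun q => by rw [map_add, map_add, h1' q, h2' q]⟩
      · rintro c p _ ⟨h1, h1'⟩
        refine ⟨?_, fun q => by rw [smul_eq_C_mul, map_mul, map_mul, h1' q, eval_C, eval_C]⟩
        rw [← mem_homogeneousSubmodule] at h1 ⊢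
        exact Submodule.smul_mem _ _ h1
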